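/- Let f be a Gaussian Entire Function f(z) = ∑_{k≥0} ζ_k z^k/√(k!) with ζ_k i.i.d. standard complex Gaussian. Then for each r ≥ 1 and m ≥ 3, P(max_{|z|≤r} |f(z)| ≤ e^{-m r²}) ≤ exp(−(m²/log m)·r⁴). -/

import Mathlib

open MeasureTheory ProbabilityTheory

/-- The law of a standard complex Gaussian: density `(1/π) e^{-|w|²}` w.r.t.
Lebesgue measure on `ℂ`. -/
noncomputable def stdComplexGaussian : Measure ℂ :=
  volume.withDensity fun w => ENNReal.ofReal (Real.exp (-‖w‖ ^ 2) / Real.pi)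

open scoped ENNReal NNReal

lemma coeff_bound {a : ℕ → ℂ} {r M : ℝ} (hr : 0 < r)
    (hsum : Summable fun k => ‖a k‖ * r ^ k)
    (hbd : ∀ z ∈ Metric.closedBall (0:ℂ) r, ‖∑' k, a k * z ^ k‖ ≤ M)
    (n : ℕ) : ‖a n‖ * r ^ n ≤ M := by
  set g : ℂ → ℂ := fun z => ∑' k, a k * z ^ k with hg
  set p : FormalMultilinearSeries ℂ ℂ ℂ :=
    fun k => ContinuousMultilinearMap.mkPiRing ℂ (Fin k) (a k) with hp
  have hpnorm : ∀ k, ‖p k‖ = ‖a k‖ := by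
    intro k
    rw [hp]
    exact ContinuousMultilinearMap.norm_mkPiRing _
  have hps : HasFPowerSeriesOnBall g p 0 (ENNReal.ofReal r) := by
    constructor
    · have : Summable fun k => ‖p k‖ * (r.toNNReal : ℝ) ^ k := by
        simpa [hpnorm, Real.coe_toNNReal r hr.le] using hsum
      simpa [ENNReal.ofReal, ENNReal.coe_le_coe] using p.le_radius_of_summable_norm this
    · simpa using hr
    · intro y hy
      have hyr : ‖y‖ ≤ r := by
        rw [Metric.emetric_ball] at hy
        simpa [Complex.dist_eq] using (Metric.mem_ball.mp hy).le
      have hsum' : Summable fun k => a k * y ^ k := by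
        apply Summable.of_norm
        apply hsum.of_nonneg_of_le (fun k => norm_nonneg _)
        intro k
        rw [norm_mul, norm_pow]
        exact mul_le_mul_of_nonneg_left (pow_le_pow_left₀ (norm_nonneg _) hyr k)
          (norm_nonneg _)
      have hgy : g (0 + y) = ∑' (b : ℕ), a b * y ^ b := by simp [hg]
      rw [hgy]
      convert hsum'.hasSum using 2 with k
      · rfl
      simp [hp, ContinuousMultilinearMap.mkPiRing_apply, smul_eq_mul, mul_comm]
  have hM : 0 ≤ M := le_trans (norm_nonneg _) (hbd 0 (by simp [hr.le]))
  have hdiff : DifferentiableOn ℂ g (Metric.ball 0 r) := by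
    have := hps.differentiableOn
    rwa [Metric.emetric_ball] at this
  have key : ∀ r' ∈ Set.Ioo (0:ℝ) r, ‖a n‖ * r' ^ n ≤ M := by
    rintro r' ⟨h0, hlt⟩
    have hsub : Metric.closedBall (0:ℂ) r' ⊆ Metric.ball (0:ℂ) r :=
      Metric.closedBall_subset_ball hlt
    have hd' : DifferentiableOn ℂ g (Metric.closedBall 0 (r'.toNNReal : ℝ)) := by
      rw [Real.coe_toNNReal _ h0.le]; exact hdiff.mono hsub
    have hc : HasFPowerSeriesOnBall g (cauchyPowerSeries g 0 r'.toNNReal) 0 r'.toNNReal :=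
      hd'.hasFPowerSeriesOnBall (by simpa using h0)
    have huniq : p = cauchyPowerSeries g 0 r'.toNNReal :=
      hps.hasFPowerSeriesAt.eq_formalMultilinearSeries hc.hasFPowerSeriesAt
    have hbd' : ∀ θ : ℝ, ‖g (circleMap 0 (r'.toNNReal : ℝ) θ)‖ ≤ M := by
      intro θ
      apply hbd
      rw [Metric.mem_closedBall, Complex.dist_eq, sub_zero, norm_circleMap_zero,
        Real.coe_toNNReal _ h0.le, abs_of_pos h0]
      exact hlt.le
    have hcont : Continuous fun θ : ℝ => ‖g (circleMap 0 (r'.toNNReal : ℝ) θ)‖ := by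
      apply Continuous.norm
      apply hd'.continuousOn.comp_continuous (continuous_circleMap 0 _)
      intro θ
      rw [Metric.mem_closedBall, Complex.dist_eq, sub_zero, norm_circleMap_zero,
        abs_of_nonneg r'.toNNReal.coe_nonneg]
    have hint : ∫ θ in (0:ℝ)..2 * Real.pi, ‖g (circleMap 0 (r'.toNNReal : ℝ) θ)‖ ≤
        2 * Real.pi * M := by
      have := intervalIntegral.integral_mono_on (μ := volume) Real.two_pi_pos.le
        (hcont.intervalIntegrable _ _) intervalIntegrable_const (fun x _ => hbd' x)
      simpa [smul_eq_mul] using this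
    have hco : (r'.toNNReal : ℝ) = r' := Real.coe_toNNReal _ h0.le
    have hnb := norm_cauchyPowerSeries_le g 0 (r'.toNNReal : ℝ) n
    rw [← huniq, hpnorm, hco] at hnb
    rw [hco] at hint
    have hIM : (2 * Real.pi)⁻¹ *
        (∫ θ in (0:ℝ)..2 * Real.pi, ‖g (circleMap 0 r' θ)‖) ≤ M := by
      have h2 := mul_le_mul_of_nonneg_left hint
        (by positivity : (0:ℝ) ≤ (2 * Real.pi)⁻¹)
      refine h2.trans (le_of_eq ?_)
      field_simp
    have h1 : ‖a n‖ ≤ M * (r'⁻¹) ^ n := by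
      refine hnb.trans ?_
      rw [abs_of_pos h0]
      exact mul_le_mul_of_nonneg_right hIM (by positivity)
    calc ‖a n‖ * r' ^ n ≤ M * (r'⁻¹) ^ n * r' ^ n :=
          mul_le_mul_of_nonneg_right h1 (by positivity)
      _ = M := by
          rw [mul_assoc, ← mul_pow, inv_mul_cancel₀ h0.ne', one_pow, mul_one]
  have htend : Filter.Tendsto (fun x : ℝ => ‖a n‖ * x ^ n)
      (nhdsWithin r (Set.Iio r)) (nhds (‖a n‖ * r ^ n)) :=
    ((continuous_const.mul (continuous_pow n)).tendsto r).mono_left nhdsWithin_le_nhds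
  refine le_of_tendsto htend ?_
  filter_upwards [Ioo_mem_nhdsLT_of_mem (Set.mem_Ioc.mpr ⟨hr, le_refl r⟩)] with x hx
  exact key x hx

lemma gauss_density_meas :
    Measurable fun w : ℂ => ENNReal.ofReal (Real.exp (-‖w‖ ^ 2) / Real.pi) := by
  have : Measurable fun w : ℂ => ‖w‖ := continuous_norm.measurable
  fun_prop

lemma gauss_ball {s : ℝ} (hs : 0 ≤ s) :
    stdComplexGaussian (Metric.closedBall 0 s) ≤ ENNReal.ofReal (s ^ 2) := by
  rw [stdComplexGaussian, withDensity_apply _ measurableSet_closedBall]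
  calc ∫⁻ w in Metric.closedBall (0:ℂ) s,
        ENNReal.ofReal (Real.exp (-‖w‖ ^ 2) / Real.pi)
      ≤ ∫⁻ _ in Metric.closedBall (0:ℂ) s, ENNReal.ofReal (1 / Real.pi) := by
        apply lintegral_mono
        intro w
        apply ENNReal.ofReal_le_ofReal
        gcongr
        exact Real.exp_le_one_iff.mpr (neg_nonpos.mpr (sq_nonneg _))
    _ = ENNReal.ofReal (1 / Real.pi) * volume (Metric.closedBall (0:ℂ) s) := by
        rw [MeasureTheory.setLIntegral_const]
    _ ≤ ENNReal.ofReal (s ^ 2) := by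
        rw [Complex.volume_closedBall, ← ENNReal.ofReal_coe_nnreal, NNReal.coe_real_pi,
          ← ENNReal.ofReal_pow hs, ← ENNReal.ofReal_mul (by positivity),
          ← ENNReal.ofReal_mul (by positivity)]
        apply ENNReal.ofReal_le_ofReal
        rw [one_div, mul_comm, mul_assoc, mul_inv_cancel₀ Real.pi_ne_zero, mul_one]

lemma gauss_moment : (∫⁻ w : ℂ, (‖w‖₊ : ℝ≥0∞) ∂stdComplexGaussian) < ⊤ := by
  have hint : Integrable (fun w : ℂ => Real.exp (-(1/2) * ‖w‖ ^ 2)) := by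
    have h := (GaussianFourier.integrable_cexp_neg_mul_sq_norm_add (V := ℂ)
      (b := (1/2 : ℂ)) (by norm_num) 0 0).norm
    convert h using 2 with v
    simp only [Complex.norm_exp]
    norm_num
    rw [← Complex.ofReal_pow, Complex.ofReal_re]
  rw [stdComplexGaussian, lintegral_withDensity_eq_lintegral_mul _ gauss_density_meas
    measurable_nnnorm.coe_nnreal_ennreal]
  have hle : ∀ w : ℂ,
      (ENNReal.ofReal (Real.exp (-‖w‖ ^ 2) / Real.pi) * (‖w‖₊ : ℝ≥0∞))
        ≤ ENNReal.ofReal (Real.exp (-(1/2) * ‖w‖ ^ 2)) := by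
    intro w
    rw [← ENNReal.ofReal_coe_nnreal, coe_nnnorm, ← ENNReal.ofReal_mul (by positivity)]
    apply ENNReal.ofReal_le_ofReal
    set t := ‖w‖ with ht
    have ht0 : 0 ≤ t := norm_nonneg w
    have hpi : 1 ≤ Real.pi := by linarith [Real.pi_gt_three]
    have key : t ≤ Real.exp ((1/2) * t ^ 2) := by
      calc t ≤ 1 + (1/2) * t ^ 2 := by nlinarith [sq_nonneg (t - 1)]
        _ ≤ Real.exp ((1/2) * t ^ 2) := by
            have := Real.add_one_le_exp ((1/2) * t ^ 2)
            linarith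
    calc Real.exp (-t ^ 2) / Real.pi * t ≤ Real.exp (-t ^ 2) * t := by
          apply mul_le_mul_of_nonneg_right _ ht0
          apply div_le_self (Real.exp_nonneg _) hpi
      _ ≤ Real.exp (-(1/2) * t ^ 2) := by
          have : Real.exp (-t ^ 2) * Real.exp ((1/2) * t ^ 2) = Real.exp (-(1/2) * t^2) := by
            rw [← Real.exp_add]; ring_nf
          calc Real.exp (-t ^ 2) * t ≤ Real.exp (-t ^ 2) * Real.exp ((1/2) * t ^ 2) :=
                mul_le_mul_of_nonneg_left key (Real.exp_nonneg _)
            _ = Real.exp (-(1/2) * t ^ 2) := this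
  calc ∫⁻ w : ℂ, (ENNReal.ofReal (Real.exp (-‖w‖ ^ 2) / Real.pi) * (‖w‖₊ : ℝ≥0∞))
      ≤ ∫⁻ w : ℂ, ENNReal.ofReal (Real.exp (-(1/2) * ‖w‖ ^ 2)) := lintegral_mono hle
    _ < ⊤ := hint.lintegral_lt_top

lemma ae_summable {Ω : Type*} [MeasurableSpace Ω] (μ : Measure Ω) [IsProbabilityMeasure μ]
    (ζ : ℕ → Ω → ℂ) (hmeas : ∀ k, Measurable (ζ k))
    (hlaw : ∀ k, μ.map (ζ k) = stdComplexGaussian)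
    {c : ℕ → ℝ} (hc0 : ∀ k, 0 ≤ c k) (hc : Summable c) :
    ∀ᵐ ω ∂μ, Summable fun k => ‖ζ k ω‖ * c k := by
  set I := ∫⁻ w : ℂ, (‖w‖₊ : ℝ≥0∞) ∂stdComplexGaussian with hI
  have hmom : ∀ k, (∫⁻ ω, (‖ζ k ω‖₊ : ℝ≥0∞) ∂μ) = I := by
    intro k
    have := lintegral_map (μ := μ) measurable_nnnorm.coe_nnreal_ennreal (hmeas k)
    rw [hlaw k] at this
    exact this.symm
  have hT : (∫⁻ ω, ∑' k, ((‖ζ k ω‖₊ : ℝ≥0∞) * ENNReal.ofReal (c k)) ∂μ) ≠ ⊤ := by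
    rw [lintegral_tsum
      (fun k => ((hmeas k).nnnorm.coe_nnreal_ennreal.mul_const _).aemeasurable)]
    have heach : ∀ k, (∫⁻ ω, ((‖ζ k ω‖₊ : ℝ≥0∞) * ENNReal.ofReal (c k)) ∂μ)
        = ENNReal.ofReal (c k) * I := by
      intro k
      rw [lintegral_mul_const _ (hmeas k).nnnorm.coe_nnreal_ennreal, hmom k, mul_comm]
    rw [tsum_congr heach, ENNReal.tsum_mul_right,
      ← ENNReal.ofReal_tsum_of_nonneg hc0 hc]
    exact ENNReal.mul_ne_top ENNReal.ofReal_ne_top gauss_moment.ne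
  have hmeasT : Measurable fun ω => ∑' k, ((‖ζ k ω‖₊ : ℝ≥0∞) * ENNReal.ofReal (c k)) :=
    Measurable.ennreal_tsum fun k => (hmeas k).nnnorm.coe_nnreal_ennreal.mul measurable_const
  filter_upwards [ae_lt_top hmeasT hT] with ω hω
  apply summable_of_sum_range_le
    (c := (∑' k, ((‖ζ k ω‖₊ : ℝ≥0∞) * ENNReal.ofReal (c k))).toReal)
    (fun k => mul_nonneg (norm_nonneg _) (hc0 k))
  intro n
  rw [← ENNReal.ofReal_le_iff_le_toReal hω.ne, ENNReal.ofReal_sum_of_nonneg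
    (fun k _ => mul_nonneg (norm_nonneg _) (hc0 k))]
  refine le_trans (le_of_eq (Finset.sum_congr rfl fun k _ => ?_)) (ENNReal.sum_le_tsum _)
  rw [ENNReal.ofReal_mul (norm_nonneg _),
    ← coe_nnnorm, ENNReal.ofReal_coe_nnreal]

lemma summable_c (r : ℝ) (hr : 0 < r) :
    Summable fun k : ℕ => r ^ k / Real.sqrt (Nat.factorial k) := by
  have hpos : ∀ k : ℕ, 0 < r ^ k / Real.sqrt (Nat.factorial k) := by
    intro k
    have := Nat.factorial_pos k
    positivity
  apply summable_of_ratio_norm_eventually_le (r := 1/2) (by norm_num)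
  filter_upwards [Filter.eventually_ge_atTop ⌈4 * r ^ 2⌉₊] with k hk
  have hk4 : 4 * r ^ 2 ≤ (k : ℝ) := (Nat.ceil_le.mp hk)
  have hfac : Real.sqrt ((Nat.factorial (k+1) : ℕ) : ℝ)
      = Real.sqrt ((k : ℝ) + 1) * Real.sqrt ((Nat.factorial k : ℕ) : ℝ) := by
    rw [Nat.factorial_succ, Nat.cast_mul, Real.sqrt_mul (by positivity)]
    norm_num
  have hsq : 2 * r ≤ Real.sqrt ((k : ℝ) + 1) := by
    have h1 : (2 * r) ^ 2 ≤ (k : ℝ) + 1 := by nlinarith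
    have h2 := Real.sqrt_le_sqrt h1
    rwa [Real.sqrt_sq (by positivity)] at h2
  rw [Real.norm_of_nonneg (hpos _).le, Real.norm_of_nonneg (hpos _).le]
  have hsqpos : 0 < Real.sqrt ((Nat.factorial k : ℕ) : ℝ) := by
    have := Nat.factorial_pos k
    positivity
  rw [pow_succ, hfac, div_le_iff₀ (by positivity)]
  have hid : 1 / 2 * (r ^ k / Real.sqrt ((Nat.factorial k : ℕ) : ℝ))
      * (Real.sqrt ((k:ℝ)+1) * Real.sqrt ((Nat.factorial k : ℕ) : ℝ))
      = r ^ k * (1/2 * Real.sqrt ((k:ℝ)+1)) := by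
    field_simp
  rw [hid]
  apply mul_le_mul_of_nonneg_left _ (by positivity)
  linarith

lemma one_le_log {m : ℝ} (hm : 3 ≤ m) : 1 ≤ Real.log m := by
  have h3 : Real.exp 1 ≤ 3 := by
    have := Real.exp_one_lt_d9
    linarith
  have : Real.exp 1 ≤ m := le_trans h3 hm
  calc (1:ℝ) = Real.log (Real.exp 1) := (Real.log_exp 1).symm
    _ ≤ Real.log m := Real.log_le_log (Real.exp_pos 1) this

lemma term_bound (r m : ℝ) (hr : 1 ≤ r) (hm : 3 ≤ m) {n : ℕ}
    (hn : (n : ℝ) * Real.log m ≤ m * r ^ 2) :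
    (Real.sqrt ((Nat.factorial n : ℕ) : ℝ) / r ^ n * Real.exp (-m * r ^ 2)) ^ 2
      ≤ Real.exp (-(m * r ^ 2)) := by
  have hr0 : (0:ℝ) < r := lt_of_lt_of_le one_pos hr
  have hlog := one_le_log hm
  have hm0 : (0:ℝ) < m := by linarith
  have hnm : (n : ℝ) ≤ m * r ^ 2 := by
    calc (n : ℝ) = (n : ℝ) * 1 := (mul_one _).symm
      _ ≤ (n : ℝ) * Real.log m := by
          apply mul_le_mul_of_nonneg_left hlog (Nat.cast_nonneg n)
      _ ≤ m * r ^ 2 := hn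
  have hfac : ((Nat.factorial n : ℕ) : ℝ) ≤ (m * r ^ 2) ^ n := by
    calc ((Nat.factorial n : ℕ) : ℝ) ≤ ((n ^ n : ℕ) : ℝ) := by
          exact_mod_cast Nat.cast_le.mpr n.factorial_le_pow
      _ = ((n : ℝ)) ^ n := by push_cast; ring
      _ ≤ (m * r ^ 2) ^ n := pow_le_pow_left₀ (Nat.cast_nonneg n) hnm n
  have hsq : (Real.sqrt ((Nat.factorial n : ℕ) : ℝ)) ^ 2 = ((Nat.factorial n : ℕ) : ℝ) :=
    Real.sq_sqrt (Nat.cast_nonneg _)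
  have hexp2 : (Real.exp (-m * r ^ 2)) ^ 2 = Real.exp (-2 * (m * r ^ 2)) := by
    rw [sq, ← Real.exp_add]; ring_nf
  have lhs_eq : (Real.sqrt ((Nat.factorial n : ℕ) : ℝ) / r ^ n * Real.exp (-m * r ^ 2)) ^ 2
      = ((Nat.factorial n : ℕ) : ℝ) / (r ^ n) ^ 2 * Real.exp (-2 * (m * r ^ 2)) := by
    rw [mul_pow, div_pow, hsq, hexp2]
  rw [lhs_eq]
  have hmn : ((Nat.factorial n : ℕ) : ℝ) / (r ^ n) ^ 2 ≤ m ^ n := by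
    rw [div_le_iff₀ (by positivity)]
    calc ((Nat.factorial n : ℕ) : ℝ) ≤ (m * r ^ 2) ^ n := hfac
      _ = m ^ n * (r ^ n) ^ 2 := by rw [mul_pow, ← pow_mul, ← pow_mul, Nat.mul_comm]
  have hmexp : (m : ℝ) ^ n ≤ Real.exp (m * r ^ 2) := by
    calc (m : ℝ) ^ n = Real.exp ((n : ℝ) * Real.log m) := by
          rw [Real.exp_nat_mul, Real.exp_log hm0]
      _ ≤ Real.exp (m * r ^ 2) := Real.exp_le_exp.mpr hn
  calc ((Nat.factorial n : ℕ) : ℝ) / (r ^ n) ^ 2 * Real.exp (-2 * (m * r ^ 2))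
      ≤ Real.exp (m * r ^ 2) * Real.exp (-2 * (m * r ^ 2)) := by
        apply mul_le_mul_of_nonneg_right (le_trans hmn hmexp) (Real.exp_nonneg _)
    _ = Real.exp (-(m * r ^ 2)) := by rw [← Real.exp_add]; ring_nf

lemma prod_bound (r m : ℝ) (hr : 1 ≤ r) (hm : 3 ≤ m) :
    ∏ n ∈ Finset.range ⌈m * r ^ 2 / Real.log m⌉₊,
      ((Real.sqrt ((Nat.factorial n : ℕ) : ℝ) / r ^ n * Real.exp (-m * r ^ 2)) ^ 2)
      ≤ Real.exp (-(m ^ 2 / Real.log m) * r ^ 4) := by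
  have hr0 : (0:ℝ) < r := lt_of_lt_of_le one_pos hr
  have hlog := one_le_log hm
  have hlog0 : (0:ℝ) < Real.log m := by linarith
  have hm0 : (0:ℝ) < m := by linarith
  set x : ℝ := m * r ^ 2 / Real.log m with hx
  have hx0 : 0 < x := by positivity
  set N : ℕ := ⌈x⌉₊ with hN
  have hterm : ∀ n ∈ Finset.range N,
      (Real.sqrt ((Nat.factorial n : ℕ) : ℝ) / r ^ n * Real.exp (-m * r ^ 2)) ^ 2
        ≤ Real.exp (-(m * r ^ 2)) := by
    intro n hn
    apply term_bound r m hr hm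
    have h1 : (n : ℝ) ≤ x := by
      have h2 : n < N := Finset.mem_range.mp hn
      have h3 : (N : ℝ) < x + 1 := Nat.ceil_lt_add_one hx0.le
      have h4 : (n : ℝ) + 1 ≤ (N : ℝ) := by exact_mod_cast Nat.succ_le_of_lt h2
      linarith
    calc (n : ℝ) * Real.log m ≤ x * Real.log m :=
          mul_le_mul_of_nonneg_right h1 hlog0.le
      _ = m * r ^ 2 := by rw [hx]; field_simp
  calc ∏ n ∈ Finset.range N,
        ((Real.sqrt ((Nat.factorial n : ℕ) : ℝ) / r ^ n * Real.exp (-m * r ^ 2)) ^ 2)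
      ≤ ∏ _n ∈ Finset.range N, Real.exp (-(m * r ^ 2)) := by
        apply Finset.prod_le_prod (fun n _ => by positivity) hterm
    _ = Real.exp ((N : ℝ) * (-(m * r ^ 2))) := by
        rw [Finset.prod_const, Finset.card_range, ← Real.exp_nat_mul]
    _ ≤ Real.exp (-(m ^ 2 / Real.log m) * r ^ 4) := by
        apply Real.exp_le_exp.mpr
        have hNx : x ≤ (N : ℝ) := Nat.le_ceil x
        have hid : x * (m * r ^ 2) = m ^ 2 / Real.log m * r ^ 4 := by
          rw [hx]; field_simp
        nlinarith [mul_le_mul_of_nonneg_right hNx (by positivity : (0:ℝ) ≤ m * r ^ 2)]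

/-- For a Gaussian Entire Function `f(z) = ∑ ζ_k z^k/√(k!)`, the probability that
`max_{|z|≤r} |f| ≤ e^{-mr²}` is at most `exp(-(m²/log m) r⁴)`. -/
theorem stmt_14 {Ω : Type*} [MeasurableSpace Ω] (μ : Measure Ω) [IsProbabilityMeasure μ]
    (ζ : ℕ → Ω → ℂ) (hmeas : ∀ k, Measurable (ζ k))
    (hindep : iIndepFun ζ μ)
    (hlaw : ∀ k, μ.map (ζ k) = stdComplexGaussian)
    (f : Ω → ℂ → ℂ)
    (hf : ∀ ω z, f ω z = ∑' k, ζ k ω * z ^ k / (Real.sqrt (Nat.factorial k) : ℂ))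
    (r m : ℝ) (hr : 1 ≤ r) (hm : 3 ≤ m) :
    μ {ω | ∀ z ∈ Metric.closedBall (0 : ℂ) r,
        ‖f ω z‖ ≤ Real.exp (-m * r ^ 2)} ≤
      ENNReal.ofReal (Real.exp (-(m ^ 2 / Real.log m) * r ^ 4)) := by

  classical
  have hr0 : (0:ℝ) < r := lt_of_lt_of_le one_pos hr
  set M : ℝ := Real.exp (-m * r ^ 2) with hM
  set s : ℕ → ℝ := fun n => Real.sqrt ((Nat.factorial n : ℕ) : ℝ) / r ^ n * M with hs
  have hs0 : ∀ n, 0 ≤ s n := by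
    intro n
    have : (0:ℝ) < M := Real.exp_pos _
    positivity
  set N : ℕ := ⌈m * r ^ 2 / Real.log m⌉₊ with hN
  set c : ℕ → ℝ := fun k => r ^ k / Real.sqrt ((Nat.factorial k : ℕ) : ℝ) with hc
  have hae := ae_summable μ ζ hmeas hlaw
    (fun k => by
      have := Nat.factorial_pos k
      positivity)
    (summable_c r hr0)
  have hBad0 : μ {ω | ¬ Summable fun k => ‖ζ k ω‖ * c k} = 0 := ae_iff.mp hae
  have hsub : {ω | ∀ z ∈ Metric.closedBall (0 : ℂ) r, ‖f ω z‖ ≤ M} ⊆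
      (⋂ n ∈ Finset.range N, ζ n ⁻¹' Metric.closedBall 0 (s n)) ∪
        {ω | ¬ Summable fun k => ‖ζ k ω‖ * c k} := by
    intro ω hω
    by_cases hS : Summable fun k => ‖ζ k ω‖ * c k
    · left
      simp only [Set.mem_iInter]
      intro n _
      have hfacpos : ∀ k : ℕ, (0:ℝ) < Real.sqrt ((Nat.factorial k : ℕ) : ℝ) := by
        intro k
        have := Nat.factorial_pos k
        positivity
      have hsum' : Summable fun k =>
          ‖ζ k ω / (Real.sqrt ((Nat.factorial k : ℕ) : ℝ) : ℂ)‖ * r ^ k := by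
        apply hS.congr
        intro k
        rw [norm_div, Complex.norm_real, Real.norm_of_nonneg (hfacpos k).le, hc]
        field_simp
      have hbd : ∀ z ∈ Metric.closedBall (0:ℂ) r,
          ‖∑' k, (ζ k ω / (Real.sqrt ((Nat.factorial k : ℕ) : ℝ) : ℂ)) * z ^ k‖
            ≤ M := by
        intro z hz
        have : (∑' k, (ζ k ω / (Real.sqrt ((Nat.factorial k : ℕ) : ℝ) : ℂ)) * z ^ k)
            = f ω z := by
          rw [hf ω z]
          apply tsum_congr
          intro k
          rw [div_mul_eq_mul_div]
        rw [this]
        exact hω z hz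
      have key := coeff_bound hr0 hsum' hbd n
      rw [norm_div, Complex.norm_real, Real.norm_of_nonneg (hfacpos n).le] at key
      rw [Set.mem_preimage, Metric.mem_closedBall, Complex.dist_eq, sub_zero]
      rw [div_mul_eq_mul_div, div_le_iff₀ (hfacpos n)] at key
      show ‖ζ n ω‖ ≤ Real.sqrt ((Nat.factorial n : ℕ) : ℝ) / r ^ n * M
      rw [div_mul_eq_mul_div, le_div_iff₀ (by positivity : (0:ℝ) < r ^ n)]
      calc ‖ζ n ω‖ * r ^ n ≤ M * Real.sqrt ((Nat.factorial n : ℕ) : ℝ) := key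
        _ = Real.sqrt ((Nat.factorial n : ℕ) : ℝ) * M := mul_comm _ _
    · right
      exact hS
  calc μ {ω | ∀ z ∈ Metric.closedBall (0 : ℂ) r, ‖f ω z‖ ≤ M}
      ≤ μ ((⋂ n ∈ Finset.range N, ζ n ⁻¹' Metric.closedBall 0 (s n)) ∪
          {ω | ¬ Summable fun k => ‖ζ k ω‖ * c k}) := measure_mono hsub
    _ ≤ μ (⋂ n ∈ Finset.range N, ζ n ⁻¹' Metric.closedBall 0 (s n)) +
          μ {ω | ¬ Summable fun k => ‖ζ k ω‖ * c k} := measure_union_le _ _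
    _ = μ (⋂ n ∈ Finset.range N, ζ n ⁻¹' Metric.closedBall 0 (s n)) := by
        rw [hBad0, add_zero]
    _ = ∏ n ∈ Finset.range N, μ (ζ n ⁻¹' Metric.closedBall 0 (s n)) :=
        hindep.measure_inter_preimage_eq_mul (Finset.range N)
          (fun i _ => measurableSet_closedBall)
    _ = ∏ n ∈ Finset.range N, stdComplexGaussian (Metric.closedBall 0 (s n)) := by
        apply Finset.prod_congr rfl
        intro n _
        rw [← hlaw n, Measure.map_apply (hmeas n) measurableSet_closedBall]
    _ ≤ ∏ n ∈ Finset.range N, ENNReal.ofReal ((s n) ^ 2) :=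
        Finset.prod_le_prod' fun n _ => gauss_ball (hs0 n)
    _ = ENNReal.ofReal (∏ n ∈ Finset.range N, (s n) ^ 2) :=
        (ENNReal.ofReal_prod_of_nonneg fun i _ => sq_nonneg _).symm
    _ ≤ ENNReal.ofReal (Real.exp (-(m ^ 2 / Real.log m) * r ^ 4)) :=
        ENNReal.ofReal_le_ofReal (prod_bound r m hr hm)
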